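/- Let G be a finite simple graph that is MEG-extremal, i.e., meg(G) equals the number of vertices of G, and let H be any finite simple graph. Then the Cartesian product G □ H is MEG-extremal, i.e., meg(G □ H) equals the number of vertices of G □ H. -/

import Mathlib

open SimpleGraph

/-- A pair of vertices `u`, `v` monitors an edge `e` if `u` and `v` are reachable from
each other and `e` belongs to every shortest path (walk of length `G.dist u v`)
between `u` and `v`. -/
def Monitors {V : Type*} (G : SimpleGraph V) (u v : V) (e : Sym2 V) : Prop :=
  G.Reachable u v ∧ ∀ p : G.Walk u v, p.length = G.dist u v → e ∈ p.edges

/-- A monitoring edge-geodetic set of `G`: every edge of `G` is monitored by some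
pair of vertices of `M`. -/
def IsMEGSet {V : Type*} (G : SimpleGraph V) (M : Set V) : Prop :=
  ∀ e ∈ G.edgeSet, ∃ u ∈ M, ∃ v ∈ M, Monitors G u v e

/-- The monitoring edge-geodetic number of `G`: the minimum size of an MEG-set. -/
noncomputable def meg {V : Type*} [Fintype V] (G : SimpleGraph V) : ℕ :=
  sInf {n : ℕ | ∃ M : Finset V, IsMEGSet G ↑M ∧ M.card = n}

section Aux

variable {α β : Type*} {G : SimpleGraph α} {H : SimpleGraph β}

/-- Project a walk in the box product to walks in the factors, with lengths adding up. -/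
lemma exists_proj_walks {x y : α × β} (p : (G □ H).Walk x y) :
    ∃ (q : G.Walk x.1 y.1) (r : H.Walk x.2 y.2), q.length + r.length = p.length := by
  induction p with
  | nil => exact ⟨.nil, .nil, rfl⟩
  | @cons x z y h w ih =>
    obtain ⟨q, r, hqr⟩ := ih
    rcases (SimpleGraph.boxProd_adj).1 h with ⟨hGadj, h2⟩ | ⟨hHadj, h1⟩
    · refine ⟨Walk.cons hGadj q, r.copy h2.symm rfl, ?_⟩
      simp only [Walk.length_cons, Walk.length_copy]
      omega
    · refine ⟨q.copy h1.symm rfl, Walk.cons hHadj r, ?_⟩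
      simp only [Walk.length_cons, Walk.length_copy]
      omega

lemma dist_add_dist_le_length {x y : α × β} (p : (G □ H).Walk x y) :
    G.dist x.1 y.1 + H.dist x.2 y.2 ≤ p.length := by
  obtain ⟨q, r, hqr⟩ := exists_proj_walks p
  have h1 := SimpleGraph.dist_le q
  have h2 := SimpleGraph.dist_le r
  omega

lemma length_boxProdLeft {a₁ a₂ : α} (b : β) (q : G.Walk a₁ a₂) :
    (q.boxProdLeft H b).length = q.length := by
  unfold Walk.boxProdLeft; exact Walk.length_map _ _

lemma length_boxProdRight {b₁ b₂ : β} (a : α) (r : H.Walk b₁ b₂) :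
    (r.boxProdRight G a).length = r.length := by
  unfold Walk.boxProdRight; exact Walk.length_map _ _

lemma edges_boxProdLeft {a₁ a₂ : α} (b : β) (q : G.Walk a₁ a₂) :
    (q.boxProdLeft H b).edges = q.edges.map (Sym2.map (fun a => (a, b))) := by
  unfold Walk.boxProdLeft; exact Walk.edges_map _ _

lemma edges_boxProdRight {b₁ b₂ : β} (a : α) (r : H.Walk b₁ b₂) :
    (r.boxProdRight G a).edges = r.edges.map (Sym2.map (fun b => (a, b))) := by
  unfold Walk.boxProdRight; exact Walk.edges_map _ _

lemma boxProd_dist_eq {u v : α} {c d : β} (hg : G.Reachable u v) (hh : H.Reachable c d) :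
    (G □ H).dist (u, c) (v, d) = G.dist u v + H.dist c d := by
  obtain ⟨q0, hq0⟩ := hg.exists_walk_length_eq_dist
  obtain ⟨r0, hr0⟩ := hh.exists_walk_length_eq_dist
  have hle : (G □ H).dist (u, c) (v, d) ≤ G.dist u v + H.dist c d := by
    have := SimpleGraph.dist_le ((q0.boxProdLeft H c).append (r0.boxProdRight G v))
    rwa [Walk.length_append, length_boxProdLeft, length_boxProdRight, hq0, hr0] at this
  have hreach : (G □ H).Reachable (u, c) (v, d) :=
    ⟨(q0.boxProdLeft H c).append (r0.boxProdRight G v)⟩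
  obtain ⟨p, hp⟩ := hreach.exists_walk_length_eq_dist
  have hge := dist_add_dist_le_length p
  simp only at hge
  omega

lemma sym2_map_fst_left {b : β} (e : Sym2 α) :
    Sym2.map Prod.fst (Sym2.map (fun a : α => (a, b)) e) = e := by
  induction e using Sym2.ind with
  | _ a₁ a₂ => simp [Sym2.map_pair_eq]

lemma sym2_map_snd_left {b : β} (e : Sym2 α) :
    Sym2.map Prod.snd (Sym2.map (fun a : α => (a, b)) e) = s(b, b) := by
  induction e using Sym2.ind with
  | _ a₁ a₂ => simp [Sym2.map_pair_eq]

lemma sym2_map_fst_right {a : α} (e : Sym2 β) :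
    Sym2.map Prod.fst (Sym2.map (fun b : β => (a, b)) e) = s(a, a) := by
  induction e using Sym2.ind with
  | _ b₁ b₂ => simp [Sym2.map_pair_eq]

/-- If a pair monitors a `G`-type edge at `H`-level `b` in the box product, then both
vertices of the pair lie in layer `b` and their first coordinates monitor the edge in `G`. -/
lemma monitors_layer {u v x y : α} {b c d : β} (hadj : G.Adj x y)
    (hM : Monitors (G □ H) (u, c) (v, d) s((x, b), (y, b))) :
    c = b ∧ d = b ∧ Monitors G u v s(x, y) := by
  obtain ⟨hreach, hmon⟩ := hM
  obtain ⟨p0⟩ := hreach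
  obtain ⟨q1, r1, -⟩ := exists_proj_walks p0
  have hg : G.Reachable u v := ⟨q1⟩
  have hh : H.Reachable c d := ⟨r1⟩
  obtain ⟨q0, hq0⟩ := hg.exists_walk_length_eq_dist
  obtain ⟨r0, hr0⟩ := hh.exists_walk_length_eq_dist
  have hdist := boxProd_dist_eq hg hh
  have hd : d = b := by
    have hW : ((r0.boxProdRight G u).append (q0.boxProdLeft H d)).length
        = (G □ H).dist (u, c) (v, d) := by
      rw [Walk.length_append, length_boxProdLeft, length_boxProdRight, hq0, hr0, hdist]
      omega
    have hmem := hmon _ hW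
    rw [Walk.edges_append] at hmem
    rcases List.mem_append.1 hmem with hmem | hmem
    · exfalso
      rw [edges_boxProdRight] at hmem
      obtain ⟨e', -, he'⟩ := List.mem_map.1 hmem
      have h2 := congrArg (Sym2.map Prod.fst) he'
      rw [sym2_map_fst_right] at h2
      rw [Sym2.map_pair_eq] at h2
      simp only [Sym2.eq_iff] at h2
      rcases h2 with ⟨h3, h4⟩ | ⟨h3, h4⟩ <;>
        first
          | exact hadj.ne (h3.symm.trans h4)
          | exact hadj.ne (h4.symm.trans h3)
    · rw [edges_boxProdLeft] at hmem
      obtain ⟨e', -, he'⟩ := List.mem_map.1 hmem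
      have h2 := congrArg (Sym2.map Prod.snd) he'
      rw [sym2_map_snd_left] at h2
      rw [Sym2.map_pair_eq] at h2
      simp only [Sym2.eq_iff] at h2
      tauto
  have hc : c = b := by
    have hW : ((q0.boxProdLeft H c).append (r0.boxProdRight G v)).length
        = (G □ H).dist (u, c) (v, d) := by
      rw [Walk.length_append, length_boxProdLeft, length_boxProdRight, hq0, hr0, hdist]
    have hmem := hmon _ hW
    rw [Walk.edges_append] at hmem
    rcases List.mem_append.1 hmem with hmem | hmem
    · rw [edges_boxProdLeft] at hmem
      obtain ⟨e', -, he'⟩ := List.mem_map.1 hmem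
      have h2 := congrArg (Sym2.map Prod.snd) he'
      rw [sym2_map_snd_left] at h2
      rw [Sym2.map_pair_eq] at h2
      simp only [Sym2.eq_iff] at h2
      tauto
    · exfalso
      rw [edges_boxProdRight] at hmem
      obtain ⟨e', -, he'⟩ := List.mem_map.1 hmem
      have h2 := congrArg (Sym2.map Prod.fst) he'
      rw [sym2_map_fst_right] at h2
      rw [Sym2.map_pair_eq] at h2
      simp only [Sym2.eq_iff] at h2
      rcases h2 with ⟨h3, h4⟩ | ⟨h3, h4⟩ <;>
        first
          | exact hadj.ne (h3.symm.trans h4)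
          | exact hadj.ne (h4.symm.trans h3)
  refine ⟨hc, hd, hg, fun q2 hq2 => ?_⟩
  have hmon' : ∀ p : (G □ H).Walk (u, b) (v, b),
      p.length = (G □ H).dist (u, b) (v, b) → s((x, b), (y, b)) ∈ p.edges := by
    subst hc; subst hd; exact hmon
  have hdist' : (G □ H).dist (u, b) (v, b) = G.dist u v := by
    rw [boxProd_dist_eq hg (Reachable.refl b), SimpleGraph.dist_self]
    omega
  have hlift : (q2.boxProdLeft H b).length = (G □ H).dist (u, b) (v, b) := by
    rw [length_boxProdLeft, hq2, hdist']
  have hmem := hmon' _ hlift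
  rw [edges_boxProdLeft] at hmem
  obtain ⟨e', he'm, he'⟩ := List.mem_map.1 hmem
  have h2 := congrArg (Sym2.map Prod.fst) he'
  rw [sym2_map_fst_left, Sym2.map_pair_eq] at h2
  exact h2 ▸ he'm

end Aux

section MEG

variable {V : Type*} [Fintype V]

lemma monitors_of_adj {x y : V} (G : SimpleGraph V) (h : G.Adj x y) :
    Monitors G x y s(x, y) := by
  have hr : G.Reachable x y := h.reachable
  have hd : G.dist x y = 1 := by
    have h1 : G.dist x y ≤ 1 := by
      simpa using SimpleGraph.dist_le (Walk.cons h Walk.nil)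
    have h2 := hr.pos_dist_of_ne h.ne
    omega
  refine ⟨hr, fun p hp => ?_⟩
  rw [hd] at hp
  cases p with
  | nil => simp at hp
  | @cons _ z _ h' q =>
    simp only [Walk.length_cons, Nat.add_eq_right, Nat.succ_eq_add_one] at hp
    have hq : q.length = 0 := by omega
    have hz : z = y := Walk.eq_of_length_eq_zero hq
    subst hz
    simp [Walk.edges_cons]

lemma isMEGSet_univ (G : SimpleGraph V) : IsMEGSet G ↑(Finset.univ : Finset V) := by
  intro e he
  induction e using Sym2.ind with
  | _ x y =>
    rw [SimpleGraph.mem_edgeSet] at he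
    exact ⟨x, by simp, y, by simp, monitors_of_adj G he⟩

end MEG

/-- if `G` is MEG-extremal then so is the Cartesian product `G □ H`. -/
theorem meg_boxProd_extremal {α β : Type*} [Fintype α] [Fintype β]
    (G : SimpleGraph α) (H : SimpleGraph β) (hG : meg G = Fintype.card α) :
    meg (G □ H) = Fintype.card (α × β) := by
  classical
  set S : Set ℕ := {n : ℕ | ∃ M : Finset (α × β), IsMEGSet (G □ H) ↑M ∧ M.card = n} with hS
  have hmem : Fintype.card (α × β) ∈ S :=
    ⟨Finset.univ, isMEGSet_univ _, Finset.card_univ⟩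
  have hlb : ∀ n ∈ S, Fintype.card (α × β) ≤ n := by
    rintro n ⟨M, hM, rfl⟩
    have hMuniv : M = Finset.univ := by
      apply Finset.eq_univ_of_forall
      rintro ⟨a, b⟩
      by_contra hab
      have hne : ¬ IsMEGSet G ↑((Finset.univ : Finset α).erase a) := by
        intro hmeg
        have h1 : meg G ≤ ((Finset.univ : Finset α).erase a).card :=
          Nat.sInf_le ⟨_, hmeg, rfl⟩
        rw [Finset.card_erase_of_mem (Finset.mem_univ a), Finset.card_univ] at h1
        have hpos : 0 < Fintype.card α := Fintype.card_pos_iff.mpr ⟨a⟩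
        omega
      rw [IsMEGSet] at hne
      push_neg at hne
      obtain ⟨e, he, hprop⟩ := hne
      induction e using Sym2.ind with
      | _ x y =>
        rw [SimpleGraph.mem_edgeSet] at he
        have heprod : s(((x : α), b), (y, b)) ∈ (G □ H).edgeSet := by
          rw [SimpleGraph.mem_edgeSet]
          exact SimpleGraph.boxProd_adj_left.mpr he
        obtain ⟨⟨u, c⟩, huM, ⟨v, d⟩, hvM, hmon⟩ := hM _ heprod
        obtain ⟨hc, hd, hmonG⟩ := monitors_layer he hmon
        subst hc
        subst hd
        have huv : u = a ∨ v = a := by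
          by_contra hcon
          push_neg at hcon
          exact hprop u (by simp [hcon.1]) v (by simp [hcon.2]) hmonG
        rcases huv with rfl | rfl
        · exact hab huM
        · exact hab hvM
    rw [hMuniv, Finset.card_univ]
  have h1 : meg (G □ H) ≤ Fintype.card (α × β) := Nat.sInf_le hmem
  have h2 : Fintype.card (α × β) ≤ meg (G □ H) := hlb _ (Nat.sInf_mem ⟨_, hmem⟩)
  omega
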